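/- Let A be an abelian category in which Ext groups are defined (e.g. Mathlib's Ext groups for abelian categories, under a HasExt hypothesis). Then for every object y of A and every n ≥ 1, the contravariant functor Ext^n(−, y) is weakly effaceable: for every object x and every class α ∈ Ext^n(x, y) there exists an epimorphism p: x' ↠ x such that the pullback of α along p vanishes, i.e. Ext^n(p, y)(α) = 0. -/

import Mathlib

/-!
**Statement 10.** In an abelian category with Ext groups (Mathlib's `Ext` under a
`HasExt` hypothesis), the contravariant functor `Ext^n(−, y)` is weakly effaceable for
every `n ≥ 1`.
-/

open CategoryTheory CategoryTheory.Abelian CategoryTheory.Limits HomologicalComplex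

universe w v u

/-- For every object `y`, every `n ≥ 1`, every object `x` and every class
`α ∈ Ext^n(x, y)`, there exists an epimorphism `p : x' ↠ x` such that the pullback of
`α` along `p` (i.e. the composition `(mk₀ p).comp α`) vanishes. -/
theorem ext_weakly_effaceable {A : Type u} [Category.{v} A] [Abelian A] [HasExt.{w} A]
    (y : A) (n : ℕ) (hn : 1 ≤ n) (x : A) (α : Ext x y n) :
    ∃ (x' : A) (p : x' ⟶ x), Epi p ∧ (Ext.mk₀ p).comp α (zero_add n) = 0 := by
  letI := HasDerivedCategory.standard A
  have : (HomotopyCategory.quasiIso A (ComplexShape.up ℤ)).HasRightCalculusOfFractions := by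
    rw [HomotopyCategory.quasiIso_eq_subcategoryAcyclic_W]
    infer_instance
  let Qu := HomotopyCategory.quotient A (ComplexShape.up ℤ)
  let Qh := DerivedCategory.Qh (C := A)
  let X₀ : CochainComplex A ℤ := (single A (ComplexShape.up ℤ) 0).obj x
  let Y₀ : CochainComplex A ℤ := (single A (ComplexShape.up ℤ) 0).obj y
  let c₁ : ((DerivedCategory.singleFunctor A 0).obj y)⟦(n:ℤ)⟧ ⟶
      Qh.obj ((Qu.obj Y₀)⟦(n:ℤ)⟧) := (Qh.commShiftIso (n:ℤ)).inv.app (Qu.obj Y₀)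
  let c₂ : Qh.obj ((Qu.obj Y₀)⟦(n:ℤ)⟧) ⟶ Qh.obj (Qu.obj (Y₀⟦(n:ℤ)⟧)) :=
    Qh.map ((Qu.commShiftIso (n:ℤ)).inv.app Y₀)
  let f : Qh.obj (Qu.obj X₀) ⟶ Qh.obj (Qu.obj (Y₀⟦(n:ℤ)⟧)) := α.hom ≫ c₁ ≫ c₂
  obtain ⟨φ, hφ⟩ := Localization.exists_rightFraction Qh
    (HomotopyCategory.quasiIso A (ComplexShape.up ℤ)) f
  have hsf := φ.map_s_comp_map Qh (Localization.inverts Qh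
    (HomotopyCategory.quasiIso A (ComplexShape.up ℤ)))
  rw [← hφ] at hsf
  obtain ⟨X', s, hs, g, rfl⟩ := φ.cases
  obtain ⟨K⟩ := X'
  obtain ⟨s₀, rfl⟩ := Qu.map_surjective s
  obtain ⟨g₀, rfl⟩ := Qu.map_surjective g
  replace hs := (HomotopyCategory.quotient_map_mem_quasiIso_iff s₀).1 hs
  rw [HomologicalComplex.mem_quasiIso_iff] at hs
  haveI : QuasiIso s₀ := hs
  dsimp at hsf
  -- the epimorphism
  let p : K.cycles 0 ⟶ x := K.homologyπ 0 ≫ homologyMap s₀ 0 ≫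
    (singleObjHomologySelfIso (ComplexShape.up ℤ) 0 x).hom
  -- the inclusion of cycles, as a chain map from a single complex
  let i : (single A (ComplexShape.up ℤ) 0).obj (K.cycles 0) ⟶ K :=
    mkHomFromSingle (K.iCycles 0) (fun k _ => K.iCycles_d 0 k)
  have hcomm : i ≫ s₀ = (single A (ComplexShape.up ℤ) 0).map p := by
    apply HomologicalComplex.hom_ext
    intro k
    by_cases hk : k = 0
    · subst hk
      simp only [HomologicalComplex.comp_f, single_map_f_self, mkHomFromSingle_f]
      simp only [Category.assoc, p]
      rw [← cancel_mono (singleObjXSelf (ComplexShape.up ℤ) 0 x).hom]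
      simp only [Category.assoc, Iso.inv_hom_id, Category.comp_id]
      rw [mkHomFromSingle_f, Category.assoc, cancel_epi,
        homologyπ_naturality_assoc, homologyπ_singleObjHomologySelfIso_hom,
        singleObjCyclesSelfIso_hom, cyclesMap_i_assoc]
    · apply (isZero_single_obj_X (ComplexShape.up ℤ) 0 _ k hk).eq_of_src
  have hzero : i ≫ g₀ = 0 := by
    apply HomologicalComplex.hom_ext
    intro k
    by_cases hk : k = 0
    · subst hk
      apply (isZero_single_obj_X (ComplexShape.up ℤ) 0 y ((0:ℤ) + n)
        (by omega)).eq_of_tgt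
    · apply (isZero_single_obj_X (ComplexShape.up ℤ) 0 _ k hk).eq_of_src
  refine ⟨K.cycles 0, p, epi_comp _ _, ?_⟩
  ext
  rw [Ext.comp_hom, Ext.mk₀_hom, Ext.zero_hom]
  rw [ShiftedHom.mk₀_comp]
  -- identify the single functor map
  have hmap : (DerivedCategory.singleFunctor A 0).map p =
      Qh.map (Qu.map ((single A (ComplexShape.up ℤ) 0).map p)) := rfl
  rw [hmap, ← hcomm]
  haveI : IsIso c₁ := ((Qh.commShiftIso (n:ℤ)).app (Qu.obj Y₀)).isIso_inv
  have : α.hom = f ≫ inv c₂ ≫ inv c₁ := by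
    exact (by simp : α.hom ≫ c₁ ≫ c₂ ≫ inv c₂ ≫ inv c₁ = α.hom).symm.trans
      ((Category.assoc α.hom (c₁ ≫ c₂) (inv c₂ ≫ inv c₁)).trans
        (congrArg (α.hom ≫ ·) (Category.assoc c₁ c₂ (inv c₂ ≫ inv c₁)))).symm
  rw [this]
  have hsf' : ∀ {Z} (h : _ ⟶ Z), Qh.map (Qu.map s₀) ≫ f ≫ h = Qh.map (Qu.map g₀) ≫ h :=
    fun h => by rw [← Category.assoc]; exact congrArg (fun t => t ≫ h) hsf
  show Qh.map (Qu.map (i ≫ s₀)) ≫ f ≫ inv c₂ ≫ inv c₁ = 0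
  rw [Qu.map_comp, Qh.map_comp, Category.assoc, hsf', ← Functor.map_comp_assoc,
    ← Qu.map_comp, hzero]
  simp
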